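/- arXiv:2007.06731 — 5 statements merged into one kernel-verified Lean document; each statement's English description precedes it below -/
import Mathlib

section
/- Transpose Theorem: every stationary point (W1, W2) of the non-uniform ℓ2 regularized linear autoencoder loss L satisfies W1 = W2ᵀ. -/
open Matrix BigOperators

attribute [local instance] Matrix.frobeniusNormedAddCommGroup Matrix.frobeniusNormedSpace

/-- Squared Frobenius norm. -/
noncomputable def frobSq {a b : ℕ} (M : Matrix (Fin a) (Fin b) ℝ) : ℝ :=
  ∑ i, ∑ j, (M i j) ^ 2

/-- The non-uniform ℓ2 regularized linear autoencoder loss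
`L(W1,W2) = (1/n)‖X − W2W1X‖_F² + ‖Λ^{1/2}W1‖_F² + ‖W2Λ^{1/2}‖_F²`. -/
noncomputable def LAEloss (m k n : ℕ) (X : Matrix (Fin m) (Fin n) ℝ) (lam : Fin k → ℝ)
    (p : Matrix (Fin k) (Fin m) ℝ × Matrix (Fin m) (Fin k) ℝ) : ℝ :=
  (1 / (n : ℝ)) * frobSq (X - p.2 * p.1 * X)
    + frobSq (Matrix.diagonal (fun i => Real.sqrt (lam i)) * p.1)
    + frobSq (p.2 * Matrix.diagonal (fun i => Real.sqrt (lam i)))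

lemma entry_diff1 {k m n : ℕ} (a : Fin k) (b : Fin m) :
    Differentiable ℝ (fun p : Matrix (Fin k) (Fin m) ℝ × Matrix (Fin m) (Fin n) ℝ => p.1 a b) :=
  ((LinearMap.toContinuousLinearMap (Matrix.entryLinearMap ℝ ℝ a b)).differentiable).comp
    differentiable_fst

lemma entry_diff2 {k m n : ℕ} (a : Fin m) (b : Fin n) :
    Differentiable ℝ (fun p : Matrix (Fin k) (Fin m) ℝ × Matrix (Fin m) (Fin n) ℝ => p.2 a b) :=
  ((LinearMap.toContinuousLinearMap (Matrix.entryLinearMap ℝ ℝ a b)).differentiable).comp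
    differentiable_snd

lemma laeloss_differentiable (m k n : ℕ) (X : Matrix (Fin m) (Fin n) ℝ) (lam : Fin k → ℝ) :
    Differentiable ℝ (LAEloss m k n X lam) := by
  unfold LAEloss frobSq
  apply Differentiable.add
  apply Differentiable.add
  · apply Differentiable.const_mul
    apply Differentiable.fun_sum; intro i _
    apply Differentiable.fun_sum; intro j _
    apply Differentiable.pow
    simp only [Matrix.sub_apply, Matrix.mul_apply]
    apply Differentiable.sub (differentiable_const _)
    apply Differentiable.fun_sum; intro c _
    apply Differentiable.mul_const
    apply Differentiable.fun_sum; intro e _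
    exact (entry_diff2 i e).mul (entry_diff1 e c)
  · apply Differentiable.fun_sum; intro i _
    apply Differentiable.fun_sum; intro j _
    apply Differentiable.pow
    simp only [Matrix.diagonal_mul]
    exact (entry_diff1 i j).const_mul _
  · apply Differentiable.fun_sum; intro i _
    apply Differentiable.fun_sum; intro j _
    apply Differentiable.pow
    simp only [Matrix.mul_diagonal]
    exact (entry_diff2 i j).mul_const _

lemma hasDerivAt_frobSq_line {a b : ℕ} (A B : Matrix (Fin a) (Fin b) ℝ) :
    HasDerivAt (fun t : ℝ => frobSq (A + t • B)) (2 * ∑ i, ∑ j, A i j * B i j) 0 := by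
  have h : ∀ t : ℝ, frobSq (A + t • B) = ∑ i, ∑ j, (A i j + t * B i j) ^ 2 := by
    intro t; simp [frobSq, Matrix.add_apply, Matrix.smul_apply, smul_eq_mul]
  simp only [h]
  have h2 : HasDerivAt (fun t : ℝ => ∑ i, ∑ j, (A i j + t * B i j) ^ 2)
      (∑ i : Fin a, ∑ j : Fin b, 2 * (A i j * B i j)) 0 := by
    apply HasDerivAt.fun_sum; intro i _
    apply HasDerivAt.fun_sum; intro j _
    have h3 : HasDerivAt (fun t : ℝ => A i j + t * B i j) (B i j) 0 :=
      (hasDerivAt_mul_const (B i j)).const_add (A i j)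
    have h4 := h3.fun_pow 2
    simpa [mul_comm, mul_assoc, mul_left_comm] using h4
  simpa [Finset.mul_sum] using h2

lemma sum_mul_eq_trace {a b : ℕ} (M N : Matrix (Fin a) (Fin b) ℝ) :
    ∑ i, ∑ j, M i j * N i j = Matrix.trace (M * Nᵀ) := by
  simp [Matrix.trace, Matrix.mul_apply, Matrix.diag]

lemma trace_sq_zero {a b : ℕ} (G : Matrix (Fin a) (Fin b) ℝ)
    (h : Matrix.trace (G * Gᵀ) = 0) : G = 0 := by
  rw [← sum_mul_eq_trace] at h
  have h2 : ∑ i, ∑ j, (G i j) ^ 2 = 0 := by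
    rw [← h]; congr 1; ext i; congr 1; ext j; ring
  ext i j
  have h3 := (Finset.sum_eq_zero_iff_of_nonneg
    (fun i _ => Finset.sum_nonneg fun j _ => sq_nonneg (G i j))).mp h2 i (Finset.mem_univ i)
  have h4 := (Finset.sum_eq_zero_iff_of_nonneg
    (fun j _ => sq_nonneg (G i j))).mp h3 j (Finset.mem_univ j)
  have := pow_eq_zero_iff (n := 2) (by norm_num) |>.mp h4
  simpa using this

lemma stationary_eqs (m k n : ℕ) (X : Matrix (Fin m) (Fin n) ℝ) (lam : Fin k → ℝ)
    (hlam_pos : ∀ i, 0 < lam i)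
    (W1 : Matrix (Fin k) (Fin m) ℝ) (W2 : Matrix (Fin m) (Fin k) ℝ)
    (hstat : fderiv ℝ (LAEloss m k n X lam) (W1, W2) = 0) :
    Matrix.diagonal lam * W1 = (1 / (n:ℝ)) • (W2ᵀ * ((X - W2 * W1 * X) * Xᵀ)) ∧
    W2 * Matrix.diagonal lam = (1 / (n:ℝ)) • ((X - W2 * W1 * X) * Xᵀ * W1ᵀ) := by
  set Λh : Matrix (Fin k) (Fin k) ℝ := Matrix.diagonal (fun i => Real.sqrt (lam i)) with hΛh
  have hΛhΛh : Λh * Λh = Matrix.diagonal lam := by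
    rw [hΛh, Matrix.diagonal_mul_diagonal]
    exact congrArg Matrix.diagonal (funext fun i => Real.mul_self_sqrt (hlam_pos i).le)
  have hdiff := laeloss_differentiable m k n X lam
  -- derivative along a line is zero
  have hline : ∀ (U : Matrix (Fin k) (Fin m) ℝ) (V : Matrix (Fin m) (Fin k) ℝ),
      HasDerivAt (fun t : ℝ => LAEloss m k n X lam ((W1, W2) + t • (U, V))) 0 0 := by
    intro U V
    have h1 : HasDerivAt (fun t : ℝ => (W1, W2) + t • ((U, V) :
        Matrix (Fin k) (Fin m) ℝ × Matrix (Fin m) (Fin k) ℝ)) (U, V) 0 := by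
      have h1' := ((hasDerivAt_id (0:ℝ)).smul_const ((U, V) :
        Matrix (Fin k) (Fin m) ℝ × Matrix (Fin m) (Fin k) ℝ)).const_add (W1, W2)
      simp at h1' ⊢
      exact h1'
    have hpt : (W1, W2) + (0:ℝ) • ((U, V) :
        Matrix (Fin k) (Fin m) ℝ × Matrix (Fin m) (Fin k) ℝ) = (W1, W2) := by simp
    have h2 : HasFDerivAt (LAEloss m k n X lam) (fderiv ℝ (LAEloss m k n X lam) (W1, W2))
        ((W1, W2) + (0:ℝ) • ((U, V) :
        Matrix (Fin k) (Fin m) ℝ × Matrix (Fin m) (Fin k) ℝ)) := by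
      rw [hpt]; exact (hdiff (W1, W2)).hasFDerivAt
    have h3 := h2.comp_hasDerivAt 0 h1
    rw [hstat] at h3
    simp at h3
    exact h3
  set A1 : Matrix (Fin m) (Fin n) ℝ := X - W2 * W1 * X with hA1
  constructor
  · -- W1 equation
    have hU : ∀ U : Matrix (Fin k) (Fin m) ℝ,
        HasDerivAt (fun t : ℝ => LAEloss m k n X lam ((W1, W2) + t • (U, 0)))
          ((1/(n:ℝ)) * (2 * ∑ i, ∑ j, A1 i j * (-(W2 * U * X)) i j)
            + 2 * ∑ i, ∑ j, (Λh * W1) i j * (Λh * U) i j) 0 := by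
      intro U
      have hfun : (fun t : ℝ => LAEloss m k n X lam ((W1, W2) + t • (U, 0)))
          = fun t : ℝ => (1/(n:ℝ)) * frobSq (A1 + t • (-(W2 * U * X)))
            + frobSq ((Λh * W1) + t • (Λh * U)) + frobSq (W2 * Λh) := by
        funext t
        show LAEloss m k n X lam (W1 + t • U, W2 + t • 0) = _
        have e1 : X - (W2 + t • (0:Matrix (Fin m) (Fin k) ℝ)) * (W1 + t • U) * X
            = A1 + t • (-(W2 * U * X)) := by
          rw [hA1]
          simp only [smul_zero, add_zero, Matrix.mul_add, Matrix.add_mul, Matrix.mul_smul,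
            Matrix.smul_mul]
          module
        have e2 : Λh * (W1 + t • U) = Λh * W1 + t • (Λh * U) := by
          simp only [Matrix.mul_add, Matrix.mul_smul]
        have e3 : (W2 + t • (0:Matrix (Fin m) (Fin k) ℝ)) * Λh = W2 * Λh := by
          simp
        simp only [LAEloss, ← hΛh, e1, e2, e3]
      rw [hfun]
      exact (((hasDerivAt_frobSq_line A1 (-(W2 * U * X))).const_mul (1/(n:ℝ))).add
        (hasDerivAt_frobSq_line (Λh * W1) (Λh * U))).add_const (frobSq (W2 * Λh))
    have hcU : ∀ U : Matrix (Fin k) (Fin m) ℝ,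
        (1/(n:ℝ)) * (2 * ∑ i, ∑ j, A1 i j * (-(W2 * U * X)) i j)
            + 2 * ∑ i, ∑ j, (Λh * W1) i j * (Λh * U) i j = 0 :=
      fun U => (hU U).unique (hline U 0)
    have s1 : ∀ U : Matrix (Fin k) (Fin m) ℝ, ∑ i, ∑ j, A1 i j * (-(W2 * U * X)) i j
        = - Matrix.trace ((W2ᵀ * (A1 * Xᵀ)) * Uᵀ) := by
      intro U
      have e : ∑ i, ∑ j, A1 i j * (-(W2 * U * X)) i j
          = - ∑ i, ∑ j, A1 i j * (W2 * U * X) i j := by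
        simp [mul_neg, Finset.sum_neg_distrib]
      rw [e, sum_mul_eq_trace]
      congr 1
      rw [Matrix.transpose_mul, Matrix.transpose_mul, ← Matrix.mul_assoc, ← Matrix.mul_assoc,
        Matrix.trace_mul_comm, Matrix.mul_assoc W2ᵀ (A1 * Xᵀ) Uᵀ]
    have s2 : ∀ U : Matrix (Fin k) (Fin m) ℝ, ∑ i, ∑ j, (Λh * W1) i j * (Λh * U) i j
        = Matrix.trace ((Matrix.diagonal lam * W1) * Uᵀ) := by
      intro U
      rw [sum_mul_eq_trace, Matrix.transpose_mul, Matrix.diagonal_transpose,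
        ← Matrix.mul_assoc, Matrix.trace_mul_comm, ← Matrix.mul_assoc, ← Matrix.mul_assoc,
        hΛhΛh]
    have hGU : ∀ U : Matrix (Fin k) (Fin m) ℝ,
        Matrix.trace ((Matrix.diagonal lam * W1 - (1/(n:ℝ)) • (W2ᵀ * (A1 * Xᵀ))) * Uᵀ) = 0 := by
      intro U
      have h := hcU U
      rw [s1 U, s2 U] at h
      rw [Matrix.sub_mul, Matrix.trace_sub, Matrix.smul_mul, Matrix.trace_smul, smul_eq_mul]
      linarith
    have hG := trace_sq_zero _ (hGU (Matrix.diagonal lam * W1 - (1/(n:ℝ)) • (W2ᵀ * (A1 * Xᵀ))))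
    exact sub_eq_zero.mp hG
  · -- W2 equation
    have hV : ∀ V : Matrix (Fin m) (Fin k) ℝ,
        HasDerivAt (fun t : ℝ => LAEloss m k n X lam ((W1, W2) + t • (0, V)))
          ((1/(n:ℝ)) * (2 * ∑ i, ∑ j, A1 i j * (-(V * W1 * X)) i j)
            + 2 * ∑ i, ∑ j, (W2 * Λh) i j * (V * Λh) i j) 0 := by
      intro V
      have hfun : (fun t : ℝ => LAEloss m k n X lam ((W1, W2) + t • (0, V)))
          = fun t : ℝ => (1/(n:ℝ)) * frobSq (A1 + t • (-(V * W1 * X)))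
            + frobSq (W2 * Λh + t • (V * Λh)) + frobSq (Λh * W1) := by
        funext t
        show LAEloss m k n X lam (W1 + t • 0, W2 + t • V) = _
        have e1 : X - (W2 + t • V) * (W1 + t • (0:Matrix (Fin k) (Fin m) ℝ)) * X
            = A1 + t • (-(V * W1 * X)) := by
          rw [hA1]
          simp only [smul_zero, add_zero, Matrix.mul_add, Matrix.add_mul, Matrix.mul_smul,
            Matrix.smul_mul]
          module
        have e2 : Λh * (W1 + t • (0:Matrix (Fin k) (Fin m) ℝ)) = Λh * W1 := by simp
        have e3 : (W2 + t • V) * Λh = W2 * Λh + t • (V * Λh) := by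
          simp only [Matrix.add_mul, Matrix.smul_mul]
        simp only [LAEloss, ← hΛh, e1, e2, e3]
        ring
      rw [hfun]
      exact (((hasDerivAt_frobSq_line A1 (-(V * W1 * X))).const_mul (1/(n:ℝ))).add
        (hasDerivAt_frobSq_line (W2 * Λh) (V * Λh))).add_const (frobSq (Λh * W1))
    have hcV : ∀ V : Matrix (Fin m) (Fin k) ℝ,
        (1/(n:ℝ)) * (2 * ∑ i, ∑ j, A1 i j * (-(V * W1 * X)) i j)
            + 2 * ∑ i, ∑ j, (W2 * Λh) i j * (V * Λh) i j = 0 :=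
      fun V => (hV V).unique (hline 0 V)
    have s1 : ∀ V : Matrix (Fin m) (Fin k) ℝ, ∑ i, ∑ j, A1 i j * (-(V * W1 * X)) i j
        = - Matrix.trace ((A1 * Xᵀ * W1ᵀ) * Vᵀ) := by
      intro V
      have e : ∑ i, ∑ j, A1 i j * (-(V * W1 * X)) i j
          = - ∑ i, ∑ j, A1 i j * (V * W1 * X) i j := by
        simp [mul_neg, Finset.sum_neg_distrib]
      rw [e, sum_mul_eq_trace]
      congr 1
      rw [Matrix.transpose_mul, Matrix.transpose_mul, ← Matrix.mul_assoc, ← Matrix.mul_assoc]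
    have s2 : ∀ V : Matrix (Fin m) (Fin k) ℝ, ∑ i, ∑ j, (W2 * Λh) i j * (V * Λh) i j
        = Matrix.trace ((W2 * Matrix.diagonal lam) * Vᵀ) := by
      intro V
      rw [sum_mul_eq_trace, Matrix.transpose_mul, Matrix.diagonal_transpose,
        Matrix.mul_assoc W2 Λh, ← Matrix.mul_assoc Λh Λh Vᵀ, hΛhΛh,
        Matrix.mul_assoc W2 (Matrix.diagonal lam) Vᵀ]
    have hGV : ∀ V : Matrix (Fin m) (Fin k) ℝ,
        Matrix.trace ((W2 * Matrix.diagonal lam - (1/(n:ℝ)) • (A1 * Xᵀ * W1ᵀ)) * Vᵀ) = 0 := by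
      intro V
      have h := hcV V
      rw [s1 V, s2 V] at h
      rw [Matrix.sub_mul, Matrix.trace_sub, Matrix.smul_mul, Matrix.trace_smul, smul_eq_mul]
      linarith
    have hG := trace_sq_zero _ (hGV (W2 * Matrix.diagonal lam - (1/(n:ℝ)) • (A1 * Xᵀ * W1ᵀ)))
    exact sub_eq_zero.mp hG

set_option maxHeartbeats 2000000 in
/-- Transpose Theorem: every stationary point `(W1, W2)` of the non-uniform ℓ2 regularized
linear autoencoder loss satisfies `W1 = W2ᵀ`. -/
theorem transpose_theorem (m k n : ℕ) (hk : 1 ≤ k) (hmk : k < m) (hn : 1 ≤ n)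
    (X : Matrix (Fin m) (Fin n) ℝ) (lam : Fin k → ℝ)
    (hlam_pos : ∀ i, 0 < lam i) (hlam_mono : StrictMono lam)
    (W1 : Matrix (Fin k) (Fin m) ℝ) (W2 : Matrix (Fin m) (Fin k) ℝ)
    (hstat : fderiv ℝ (LAEloss m k n X lam) (W1, W2) = 0) :
    W1 = W2ᵀ := by
  obtain ⟨EqA, EqB⟩ := stationary_eqs m k n X lam hlam_pos W1 W2 hstat
  set c : ℝ := 1 / (n : ℝ) with hc
  have hc0 : 0 < c := by
    rw [hc]
    have : (0:ℝ) < (n:ℝ) := by exact_mod_cast hn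
    positivity
  set Λm : Matrix (Fin k) (Fin k) ℝ := Matrix.diagonal lam with hΛm
  set S : Matrix (Fin m) (Fin m) ℝ := c • (X * Xᵀ) with hS
  set A : Matrix (Fin k) (Fin n) ℝ := W1 * X with hA
  set B : Matrix (Fin k) (Fin n) ℝ := W2ᵀ * X with hB
  have hSsym : Sᵀ = S := by
    rw [hS]
    simp [Matrix.transpose_smul, Matrix.transpose_mul, Matrix.transpose_transpose]
  have E1 : Λm * W1 = W2ᵀ * S - W2ᵀ * (W2 * (W1 * S)) := by
    rw [EqA, hS]
    simp only [Matrix.sub_mul, Matrix.mul_sub, Matrix.mul_smul, Matrix.smul_mul,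
      Matrix.mul_assoc, smul_sub]
  have E2 : W2 * Λm = S * W1ᵀ - W2 * (W1 * (S * W1ᵀ)) := by
    rw [EqB, hS]
    simp only [Matrix.sub_mul, Matrix.mul_sub, Matrix.mul_smul, Matrix.smul_mul,
      Matrix.mul_assoc, smul_sub]
  set Q : Matrix (Fin k) (Fin k) ℝ := W1 * S * W1ᵀ with hQdef
  have hQ2 : W1 * (S * W1ᵀ) = Q := by rw [hQdef, Matrix.mul_assoc]
  set K : Matrix (Fin k) (Fin k) ℝ := Λm + Q with hK
  have hQA : Q = c • (A * Aᵀ) := by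
    rw [hQdef, hS, hA]
    simp only [Matrix.smul_mul, Matrix.mul_smul, Matrix.mul_assoc, Matrix.transpose_mul]
  have hQsym : Qᵀ = Q := by
    rw [hQA]
    simp [Matrix.transpose_smul, Matrix.transpose_mul, Matrix.transpose_transpose,
      Matrix.mul_assoc]
  have hKsym : Kᵀ = K := by
    rw [hK, Matrix.transpose_add, hQsym, hΛm, Matrix.diagonal_transpose]
  have R1 : S * W1ᵀ = W2 * K := by
    rw [hK, Matrix.mul_add, E2, hQ2, sub_add_cancel]
  -- c1 : Lambda * W1 W1^T = W2^T W2 * Lambda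
  have c1 : Λm * (W1 * W1ᵀ) = W2ᵀ * W2 * Λm := by
    calc Λm * (W1 * W1ᵀ) = (Λm * W1) * W1ᵀ := by rw [Matrix.mul_assoc]
    _ = W2ᵀ * (S * W1ᵀ) - W2ᵀ * (W2 * (W1 * (S * W1ᵀ))) := by
        rw [E1]; simp only [Matrix.sub_mul, Matrix.mul_assoc]
    _ = W2ᵀ * (W2 * K) - W2ᵀ * (W2 * Q) := by rw [hQ2, R1]
    _ = W2ᵀ * (W2 * Λm) + W2ᵀ * (W2 * Q) - W2ᵀ * (W2 * Q) := by
        rw [hK, Matrix.mul_add, Matrix.mul_add]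
    _ = W2ᵀ * W2 * Λm := by rw [add_sub_cancel_right, Matrix.mul_assoc]
  set d : Fin k → ℝ := fun i => (W1 * W1ᵀ) i i with hd
  have hlamne : ∀ i j : Fin k, i ≠ j → lam i ≠ lam j := by
    intro i j hij h
    exact hij (hlam_mono.injective h)
  have hlamsqne : ∀ i j : Fin k, i ≠ j → lam i * lam i ≠ lam j * lam j := by
    intro i j hij h
    have h1 := hlam_pos i
    have h2 := hlam_pos j
    rcases lt_trichotomy (lam i) (lam j) with hl | hl | hl
    · nlinarith
    · exact hlamne i j hij hl
    · nlinarith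
  -- W1 * W1ᵀ is diagonal
  have c1T : (W1 * W1ᵀ) * Λm = Λm * (W2ᵀ * W2) := by
    have := congrArg Matrix.transpose c1
    simp only [Matrix.transpose_mul, Matrix.transpose_transpose, hΛm,
      Matrix.diagonal_transpose] at this
    rw [hΛm]
    rw [this]
  have hcomm : Λm * (Λm * (W1 * W1ᵀ)) = ((W1 * W1ᵀ) * Λm) * Λm := by
    rw [c1, c1T, ← Matrix.mul_assoc]
  have hD1off : ∀ i j : Fin k, i ≠ j → (W1 * W1ᵀ) i j = 0 := by
    intro i j hij
    have h := congrFun (congrFun hcomm i) j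
    rw [hΛm] at h
    simp only [Matrix.diagonal_mul, Matrix.mul_diagonal] at h
    have h2 : (lam i * lam i - lam j * lam j) * ((W1 * W1ᵀ) i j) = 0 := by linear_combination h
    rcases mul_eq_zero.mp h2 with h3 | h3
    · exact absurd (by linarith : lam i * lam i = lam j * lam j) (hlamsqne i j hij)
    · exact h3
  have hD1 : W1 * W1ᵀ = Matrix.diagonal d := by
    ext i j
    by_cases hij : i = j
    · subst hij; rw [Matrix.diagonal_apply_eq]
    · rw [Matrix.diagonal_apply_ne _ hij]; exact hD1off i j hij
  have hD2 : W2ᵀ * W2 = Matrix.diagonal d := by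
    ext i j
    by_cases hij : i = j
    · subst hij
      rw [Matrix.diagonal_apply_eq]
      have h := congrFun (congrFun c1 i) i
      rw [hΛm, hD1] at h
      simp only [Matrix.diagonal_mul, Matrix.mul_diagonal, Matrix.diagonal_apply_eq] at h
      exact mul_right_cancel₀ (hlam_pos i).ne' (h.symm.trans (mul_comm (lam i) (d i)))
    · rw [Matrix.diagonal_apply_ne _ hij]
      have h := congrFun (congrFun c1 i) j
      rw [hΛm, hD1] at h
      simp only [Matrix.diagonal_mul, Matrix.mul_diagonal, Matrix.diagonal_apply_ne _ hij] at h
      rw [zero_mul] at h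
      rcases mul_eq_zero.mp h.symm with h' | h'
      · exact h'
      · exact absurd h' (hlam_pos j).ne'
  -- R2W : S * W2 = W1ᵀ * Λm + S * W1ᵀ * diagonal d
  have R2W : S * W2 = W1ᵀ * Λm + S * W1ᵀ * Matrix.diagonal d := by
    have h := congrArg Matrix.transpose E1
    simp only [Matrix.transpose_sub, Matrix.transpose_mul, Matrix.transpose_transpose,
      hΛm, Matrix.diagonal_transpose, hSsym] at h
    -- h : W1ᵀ * diagonal lam = S * W2 - (assoc form) * W2
    rw [← hΛm] at h
    have h2 : W1ᵀ * Λm = S * W2 - S * W1ᵀ * Matrix.diagonal d := by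
      rw [h, ← hD2]
      congr 1
      simp only [Matrix.mul_assoc]
    rw [eq_sub_iff_add_eq] at h2
    rw [← h2]
  -- L9
  have L9 : W1 * (S * W2) = Matrix.diagonal d * Λm + Q * Matrix.diagonal d := by
    rw [R2W, Matrix.mul_add, ← Matrix.mul_assoc, ← Matrix.mul_assoc, hD1, hQ2]
  -- L10
  have L10 : W2ᵀ * (S * W2) = (W1 * W2)ᵀ * Λm + Matrix.diagonal d * K * Matrix.diagonal d := by
    rw [R2W, Matrix.mul_add, ← Matrix.mul_assoc, ← Matrix.mul_assoc, ← Matrix.transpose_mul]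
    congr 2
    rw [R1, ← Matrix.mul_assoc, hD2]
  -- L11 : Λm * (W1*W2) = (W1*W2)ᵀ * Λm
  have hRsym : (W2ᵀ * (S * W2))ᵀ = W2ᵀ * (S * W2) := by
    simp only [Matrix.transpose_mul, Matrix.transpose_transpose, hSsym, Matrix.mul_assoc]
  have L11 : Λm * (W1 * W2) = (W1 * W2)ᵀ * Λm := by
    have h := congrArg Matrix.transpose L10
    rw [hRsym, L10] at h
    simp only [Matrix.transpose_add, Matrix.transpose_mul, Matrix.transpose_transpose,
      hΛm, Matrix.diagonal_transpose, hKsym] at h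
    rw [← hΛm] at h
    have h3 : W2ᵀ * W1ᵀ * Λm + Matrix.diagonal d * K * Matrix.diagonal d
        = Λm * (W1 * W2) + Matrix.diagonal d * K * Matrix.diagonal d := by
      rw [h, Matrix.mul_assoc]
    have h4 := add_right_cancel h3
    rw [Matrix.transpose_mul, h4]
  -- L12 : (W1*W2) * K = Q
  have L12 : (W1 * W2) * K = Q := by
    rw [Matrix.mul_assoc, ← R1, hQ2]
  -- L13 : Q commutes with Λm twice
  have hΛQ : Λm * Q = (W1 * W2)ᵀ * (Λm * K) := by
    rw [← L12, ← Matrix.mul_assoc, L11, Matrix.mul_assoc]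
  have hQΛ : Q * Λm = (K * Λm) * (W1 * W2) := by
    have h := congrArg Matrix.transpose hΛQ
    simp only [Matrix.transpose_mul, Matrix.transpose_transpose, hΛm,
      Matrix.diagonal_transpose, hKsym, hQsym] at h
    rw [← hΛm] at h
    rw [h, Matrix.mul_assoc]
  have key : Q * Λm * K = K * (Λm * Q) := by
    rw [hQΛ, Matrix.mul_assoc (K * Λm) (W1 * W2) K, L12, Matrix.mul_assoc]
  have L13 : Q * Λm * Λm = Λm * (Λm * Q) := by
    have h := key
    rw [hK] at h
    simp only [Matrix.mul_add, Matrix.add_mul] at h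
    have e : Q * Λm * Q = Q * (Λm * Q) := by rw [Matrix.mul_assoc]
    rw [e] at h
    exact add_right_cancel h
  have hQoff : ∀ i j : Fin k, i ≠ j → Q i j = 0 := by
    intro i j hij
    have h := congrFun (congrFun L13 i) j
    rw [hΛm] at h
    simp only [Matrix.diagonal_mul, Matrix.mul_diagonal] at h
    have h2 : (lam i * lam i - lam j * lam j) * (Q i j) = 0 := by linear_combination -h
    rcases mul_eq_zero.mp h2 with h3 | h3
    · exact absurd (by linarith : lam i * lam i = lam j * lam j) (hlamsqne i j hij)
    · exact h3
  set q : Fin k → ℝ := fun i => Q i i with hq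
  have hQdiag : Q = Matrix.diagonal q := by
    ext i j
    by_cases hij : i = j
    · subst hij; rw [Matrix.diagonal_apply_eq]
    · rw [Matrix.diagonal_apply_ne _ hij]; exact hQoff i j hij
  have hKdiag : K = Matrix.diagonal (fun i => lam i + q i) := by
    rw [hK, hΛm, hQdiag, Matrix.diagonal_add]
  -- entrywise facts
  have L16 : ∀ i, (W1 * W2) i i * (lam i + q i) = q i := by
    intro i
    have hL12' : W1 * W2 * Matrix.diagonal (fun i => lam i + q i) = Q := by
      rw [← hKdiag]; exact L12
    have h := congrFun (congrFun hL12' i) i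
    simpa only [Matrix.mul_diagonal] using h
  have hQentry : ∀ i, Q i i = c * ∑ j, A i j * A i j := by
    intro i
    rw [hQA]
    simp [Matrix.smul_apply, Matrix.mul_apply, Matrix.transpose_apply, smul_eq_mul]
  have L17 : ∀ i, 0 ≤ q i := by
    intro i
    rw [hq]
    simp only
    rw [hQentry i]
    exact mul_nonneg hc0.le (Finset.sum_nonneg fun j _ => mul_self_nonneg _)
  have hdentry : ∀ i, d i = ∑ j, W1 i j * W1 i j := by
    intro i
    rw [hd]
    simp [Matrix.mul_apply, Matrix.transpose_apply]
  have hd0 : ∀ i, 0 ≤ d i := by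
    intro i
    rw [hdentry i]
    exact Finset.sum_nonneg fun j _ => mul_self_nonneg _
  have hdentry2 : ∀ i, d i = ∑ j, W2 j i * W2 j i := by
    intro i
    have h := congrFun (congrFun hD2 i) i
    rw [Matrix.diagonal_apply_eq] at h
    rw [← h]
    simp [Matrix.mul_apply, Matrix.transpose_apply]
  have hzentry : ∀ i, (W1 * W2) i i = ∑ j, W1 i j * W2 j i := by
    intro i
    simp [Matrix.mul_apply]
  have hzd : ∀ i, (W1 * W2) i i ≤ d i := by
    intro i
    have hcs := Finset.sum_mul_sq_le_sq_mul_sq Finset.univ (fun j => W1 i j) (fun j => W2 j i)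
    have hcs' : (∑ j, W1 i j * W2 j i)^2 ≤ (∑ j, W1 i j * W1 i j) * (∑ j, W2 j i * W2 j i) := by
      simpa only [pow_two] using hcs
    nlinarith [hcs', hd0 i, hdentry i, hdentry2 i, hzentry i]
  -- Gram Cauchy-Schwarz
  have hASW : W1 * (S * W2) = c • (A * Bᵀ) := by
    rw [hS, hA, hB]
    simp only [Matrix.smul_mul, Matrix.mul_smul, Matrix.mul_assoc, Matrix.transpose_mul,
      Matrix.transpose_transpose]
  have hBSW : W2ᵀ * (S * W2) = c • (B * Bᵀ) := by
    rw [hS, hB]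
    simp only [Matrix.smul_mul, Matrix.mul_smul, Matrix.mul_assoc, Matrix.transpose_mul,
      Matrix.transpose_transpose]
  have hgram : ∀ i, (W1 * (S * W2)) i i ^ 2 ≤ Q i i * (W2ᵀ * (S * W2)) i i := by
    intro i
    have hb : (W1 * (S * W2)) i i = c * ∑ j, A i j * B i j := by
      rw [hASW]; simp [Matrix.smul_apply, Matrix.mul_apply, Matrix.transpose_apply, smul_eq_mul]
    have hcc : (W2ᵀ * (S * W2)) i i = c * ∑ j, B i j * B i j := by
      rw [hBSW]; simp [Matrix.smul_apply, Matrix.mul_apply, Matrix.transpose_apply, smul_eq_mul]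
    have hcs := Finset.sum_mul_sq_le_sq_mul_sq Finset.univ (fun j => A i j) (fun j => B i j)
    have hcs' : (∑ j, A i j * B i j)^2 ≤ (∑ j, A i j * A i j) * (∑ j, B i j * B i j) := by
      simpa only [pow_two] using hcs
    rw [hb, hcc, hQentry i]
    nlinarith [hcs', sq_nonneg c, hc0.le, mul_le_mul_of_nonneg_left hcs' (mul_self_nonneg c)]
  -- entry values of L9, L10
  have e9 : ∀ i, (W1 * (S * W2)) i i = d i * lam i + q i * d i := by
    intro i
    have h := congrFun (congrFun L9 i) i
    rw [hΛm, hQdiag] at h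
    simpa only [Matrix.add_apply, Matrix.diagonal_mul_diagonal, Matrix.diagonal_apply_eq,
      Matrix.mul_diagonal] using h
  have e10 : ∀ i, (W2ᵀ * (S * W2)) i i = (W1 * W2) i i * lam i + (d i * (lam i + q i)) * d i := by
    intro i
    have h := congrFun (congrFun L10 i) i
    rw [hΛm, hKdiag] at h
    simpa only [Matrix.add_apply, Matrix.diagonal_mul_diagonal, Matrix.diagonal_apply_eq,
      Matrix.mul_diagonal, Matrix.transpose_apply] using h
  -- per index conclusion : z_ii = d_i
  have hzed : ∀ i, (W1 * W2) i i = d i := by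
    intro i
    have hki : 0 < lam i + q i := by
      have := hlam_pos i; have := L17 i; linarith
    have hz0 : 0 ≤ (W1 * W2) i i := by
      by_contra hneg
      push_neg at hneg
      have : (W1 * W2) i i * (lam i + q i) < 0 := mul_neg_of_neg_of_pos hneg hki
      rw [L16 i] at this
      exact absurd this (not_lt.mpr (L17 i))
    have hgram' := hgram i
    rw [e9 i, e10 i] at hgram'
    have hQq : Q i i = q i := rfl
    rw [hQq] at hgram'
    -- substitute q = z * (lam + q) in the first term of the RHS product
    have hE : q i * ((W1 * W2) i i * lam i)
        = lam i * ((lam i + q i) * ((W1 * W2) i i * (W1 * W2) i i)) := by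
      linear_combination (-(lam i * (W1 * W2) i i)) * (L16 i)
    have hsq : lam i * (lam i + q i) * (d i * d i)
        ≤ lam i * (lam i + q i) * ((W1 * W2) i i * (W1 * W2) i i) := by
      nlinarith [hgram', hE]
    have hsq2 : d i * d i ≤ (W1 * W2) i i * (W1 * W2) i i :=
      le_of_mul_le_mul_left hsq (mul_pos (hlam_pos i) hki)
    have hge : d i ≤ (W1 * W2) i i := by
      nlinarith [hsq2, hz0, hd0 i]
    exact le_antisymm (hzd i) hge
  -- conclude W1 = W2ᵀ
  have hsum : ∑ i, ∑ j, (W1 i j - W2 j i)^2 = 0 := by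
    have hterm : ∀ i : Fin k, ∑ j, (W1 i j - W2 j i)^2 = 0 := by
      intro i
      have expand : ∀ j, (W1 i j - W2 j i)^2
          = W1 i j * W1 i j - 2 * (W1 i j * W2 j i) + W2 j i * W2 j i := by
        intro j; ring
      rw [Finset.sum_congr rfl (fun j _ => expand j)]
      rw [Finset.sum_add_distrib, Finset.sum_sub_distrib, ← Finset.mul_sum]
      rw [← hdentry i, ← hdentry2 i, ← hzentry i, hzed i]
      ring
    rw [Finset.sum_congr rfl (fun i _ => hterm i), Finset.sum_const, smul_zero]
  ext i j
  have h3 := (Finset.sum_eq_zero_iff_of_nonneg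
    (fun i _ => Finset.sum_nonneg fun j _ => sq_nonneg (W1 i j - W2 j i))).mp hsum i
    (Finset.mem_univ i)
  have h4 := (Finset.sum_eq_zero_iff_of_nonneg
    (fun j _ => sq_nonneg (W1 i j - W2 j i))).mp h3 j (Finset.mem_univ j)
  have h5 := pow_eq_zero_iff (n := 2) (by norm_num) |>.mp h4
  have h6 : W1 i j = W2 j i := by linarith [sub_eq_zero.mp h5]
  simpa [Matrix.transpose_apply] using h6
end

section
/- At every stationary point (W1, W2) of the non-uniform ℓ2 regularized linear autoencoder loss L, the matrix C = (I − W2W1)XXᵀ ∈ ℝ^{m×m} is positive semidefinite, i.e. vᵀCv ≥ 0 for all v ∈ ℝ^m. -/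
open Matrix BigOperators

attribute [local instance] Matrix.frobeniusNormedAddCommGroup Matrix.frobeniusNormedSpace

noncomputable def ip {a b : ℕ} (A B : Matrix (Fin a) (Fin b) ℝ) : ℝ :=
  ∑ i, ∑ j, A i j * B i j

lemma ip_eq_trace {a b : ℕ} (A B : Matrix (Fin a) (Fin b) ℝ) :
    ip A B = (Aᵀ * B).trace := by
  simp only [ip, Matrix.trace, Matrix.diag, Matrix.mul_apply, Matrix.transpose_apply]
  exact Finset.sum_comm

lemma ip_sub_left {a b : ℕ} (A B C : Matrix (Fin a) (Fin b) ℝ) :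
    ip (A - B) C = ip A C - ip B C := by
  simp [ip, sub_mul, Finset.sum_sub_distrib]

lemma ip_smul_left {a b : ℕ} (c : ℝ) (A B : Matrix (Fin a) (Fin b) ℝ) :
    ip (c • A) B = c * ip A B := by
  simp [ip, Finset.mul_sum, mul_assoc]

lemma ip_neg_right {a b : ℕ} (A B : Matrix (Fin a) (Fin b) ℝ) :
    ip A (-B) = - ip A B := by
  simp [ip, Finset.sum_neg_distrib]

lemma ip_self_eq_zero {a b : ℕ} {A : Matrix (Fin a) (Fin b) ℝ} (h : ip A A = 0) : A = 0 := by
  ext i j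
  have h1 : ∀ i ∈ (Finset.univ : Finset (Fin a)), (0:ℝ) ≤ ∑ j, A i j * A i j :=
    fun i _ => Finset.sum_nonneg fun j _ => mul_self_nonneg _
  have h2 := (Finset.sum_eq_zero_iff_of_nonneg h1).mp h i (Finset.mem_univ i)
  have h3 := (Finset.sum_eq_zero_iff_of_nonneg
    (fun j _ => mul_self_nonneg (A i j))).mp h2 j (Finset.mem_univ j)
  simpa [mul_self_eq_zero] using h3

lemma frobSq_expand {a b : ℕ} (A B : Matrix (Fin a) (Fin b) ℝ) (t : ℝ) :
    frobSq (A + t • B) = frobSq A + 2 * t * ip A B + t ^ 2 * frobSq B := by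
  simp only [frobSq, ip, Matrix.add_apply, Matrix.smul_apply, smul_eq_mul, Finset.mul_sum,
    ← Finset.sum_add_distrib]
  exact Finset.sum_congr rfl fun i _ => Finset.sum_congr rfl fun j _ => by ring

lemma quadDeriv (a b c : ℝ) : HasDerivAt (fun t : ℝ => a + 2 * t * b + t ^ 2 * c) (2 * b) 0 := by
  have h1 : HasDerivAt (fun t : ℝ => 2 * t * b) (2 * b) 0 := by
    simpa using (((hasDerivAt_id (0:ℝ)).const_mul 2).mul_const b)
  have h2 : HasDerivAt (fun t : ℝ => t ^ 2 * c) 0 0 := by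
    simpa using ((hasDerivAt_pow 2 (0:ℝ)).mul_const c)
  simpa using (((hasDerivAt_const (0:ℝ) a).fun_add h1).fun_add h2)

lemma diff1 {m k : ℕ} (a : Fin k) (b : Fin m) :
    Differentiable ℝ (fun p : Matrix (Fin k) (Fin m) ℝ × Matrix (Fin m) (Fin k) ℝ => p.1 a b) := by
  have : (fun p : Matrix (Fin k) (Fin m) ℝ × Matrix (Fin m) (Fin k) ℝ => p.1 a b)
      = (LinearMap.toContinuousLinearMap
        (((LinearMap.proj b).comp (LinearMap.proj a)).comp
          (LinearMap.fst ℝ (Matrix (Fin k) (Fin m) ℝ) (Matrix (Fin m) (Fin k) ℝ)))) := rfl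
  rw [this]; exact ContinuousLinearMap.differentiable _

lemma diff2 {m k : ℕ} (a : Fin m) (b : Fin k) :
    Differentiable ℝ (fun p : Matrix (Fin k) (Fin m) ℝ × Matrix (Fin m) (Fin k) ℝ => p.2 a b) := by
  have : (fun p : Matrix (Fin k) (Fin m) ℝ × Matrix (Fin m) (Fin k) ℝ => p.2 a b)
      = (LinearMap.toContinuousLinearMap
        (((LinearMap.proj b).comp (LinearMap.proj a)).comp
          (LinearMap.snd ℝ (Matrix (Fin k) (Fin m) ℝ) (Matrix (Fin m) (Fin k) ℝ)))) := rfl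
  rw [this]; exact ContinuousLinearMap.differentiable _

lemma diffL {m k n : ℕ} (X : Matrix (Fin m) (Fin n) ℝ) (lam : Fin k → ℝ) :
    Differentiable ℝ (LAEloss m k n X lam) := by
  unfold LAEloss frobSq
  simp only [Matrix.mul_apply, Matrix.sub_apply]
  refine Differentiable.add (Differentiable.add (Differentiable.const_mul ?_ _) ?_) ?_
  · refine Differentiable.fun_sum fun i _ => Differentiable.fun_sum fun j _ => Differentiable.fun_pow ?_ 2
    refine Differentiable.fun_sub (differentiable_const _) ?_
    refine Differentiable.fun_sum fun c _ => Differentiable.fun_mul ?_ (differentiable_const _)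
    exact Differentiable.fun_sum fun a _ => (diff2 i a).fun_mul (diff1 a c)
  · refine Differentiable.fun_sum fun i _ => Differentiable.fun_sum fun j _ => Differentiable.fun_pow ?_ 2
    exact Differentiable.fun_sum fun a _ => (differentiable_const _).fun_mul (diff1 a j)
  · refine Differentiable.fun_sum fun i _ => Differentiable.fun_sum fun j _ => Differentiable.fun_pow ?_ 2
    exact Differentiable.fun_sum fun a _ => (diff2 i a).fun_mul (differentiable_const _)

lemma eq2_of_stat (m k n : ℕ) (X : Matrix (Fin m) (Fin n) ℝ) (lam : Fin k → ℝ)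
    (hlam_pos : ∀ i, 0 < lam i)
    (W1 : Matrix (Fin k) (Fin m) ℝ) (W2 : Matrix (Fin m) (Fin k) ℝ)
    (hstat : fderiv ℝ (LAEloss m k n X lam) (W1, W2) = 0) :
    W2 * Matrix.diagonal lam
      = (1 / (n:ℝ)) • ((X - W2 * W1 * X) * Xᵀ * W1ᵀ) := by
  set S : Matrix (Fin k) (Fin k) ℝ := Matrix.diagonal (fun i => Real.sqrt (lam i)) with hS
  set E : Matrix (Fin m) (Fin n) ℝ := X - W2 * W1 * X with hE
  have hSS : S * Sᵀ = Matrix.diagonal lam := by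
    rw [hS, Matrix.diagonal_transpose, Matrix.diagonal_mul_diagonal]
    exact congrArg Matrix.diagonal (funext fun i => Real.mul_self_sqrt (hlam_pos i).le)
  have hL : HasFDerivAt (𝕜 := ℝ) (LAEloss m k n X lam) 0 (W1, W2) := by
    have := DifferentiableAt.hasFDerivAt (𝕜 := ℝ) (diffL X lam (W1, W2))
    rwa [hstat] at this
  have key : ∀ V2 : Matrix (Fin m) (Fin k) ℝ,
      ip (W2 * Matrix.diagonal lam - (1 / (n:ℝ)) • (E * Xᵀ * W1ᵀ)) V2 = 0 := by
    intro V2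
    set D : Matrix (Fin k) (Fin m) ℝ × Matrix (Fin m) (Fin k) ℝ := (0, V2) with hD
    set F2 : Matrix (Fin m) (Fin n) ℝ := -(V2 * W1 * X) with hF2
    have hline : HasDerivAt (fun t : ℝ => ((W1, W2) : _) + t • D) D 0 := by
      exact (((hasDerivAt_id (0:ℝ)).smul_const D).const_add (W1, W2)).congr_deriv (one_smul ℝ D)
    have hL' : HasFDerivAt (𝕜 := ℝ) (LAEloss m k n X lam) 0 ((W1, W2) + (0:ℝ) • D) := by
      simpa using hL
    have hdir : HasDerivAt (fun t : ℝ => LAEloss m k n X lam ((W1, W2) + t • D)) 0 0 := by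
      exact (hL'.comp_hasDerivAt 0 hline).congr_deriv (ContinuousLinearMap.zero_apply _)
    have hfun : (fun t : ℝ => LAEloss m k n X lam ((W1, W2) + t • D))
        = fun t => ((1 / (n:ℝ)) * (frobSq E + 2 * t * ip E F2 + t ^ 2 * frobSq F2)
            + (frobSq (S * W1)))
            + (frobSq (W2 * S) + 2 * t * ip (W2 * S) (V2 * S) + t ^ 2 * frobSq (V2 * S)) := by
      funext t
      have h1 : X - (W2 + t • V2) * W1 * X = E + t • F2 := by
        rw [Matrix.add_mul, Matrix.add_mul, Matrix.smul_mul, Matrix.smul_mul, hF2, smul_neg, hE]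
        abel
      have h2 : (W2 + t • V2) * S = W2 * S + t • (V2 * S) := by
        rw [Matrix.add_mul, Matrix.smul_mul]
      simp only [LAEloss, hD, Prod.smul_mk, Prod.mk_add_mk, smul_zero, add_zero]
      rw [h1, h2, frobSq_expand, frobSq_expand]
    have hpoly : HasDerivAt (fun t : ℝ =>
        ((1 / (n:ℝ)) * (frobSq E + 2 * t * ip E F2 + t ^ 2 * frobSq F2) + (frobSq (S * W1)))
          + (frobSq (W2 * S) + 2 * t * ip (W2 * S) (V2 * S) + t ^ 2 * frobSq (V2 * S)))
        ((1 / (n:ℝ)) * (2 * ip E F2) + 2 * ip (W2 * S) (V2 * S)) 0 := by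
      exact (((quadDeriv _ _ _).const_mul _).add_const _).add (quadDeriv _ _ _)
    have hb : (1 / (n:ℝ)) * (2 * ip E F2) + 2 * ip (W2 * S) (V2 * S) = 0 :=
      hpoly.unique (hfun ▸ hdir)
    have tA : ip E (V2 * W1 * X) = ip (E * Xᵀ * W1ᵀ) V2 := by
      rw [ip_eq_trace, ip_eq_trace, Matrix.transpose_mul, Matrix.transpose_mul,
        Matrix.transpose_transpose, Matrix.transpose_transpose]
      rw [Matrix.trace_mul_comm]
      simp only [Matrix.mul_assoc]
      rw [Matrix.trace_mul_comm]
      simp only [Matrix.mul_assoc]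
    have tB : ip (W2 * S) (V2 * S) = ip (W2 * Matrix.diagonal lam) V2 := by
      rw [ip_eq_trace, ip_eq_trace, Matrix.transpose_mul, Matrix.transpose_mul, ← hSS]
      rw [Matrix.trace_mul_comm]
      simp only [Matrix.mul_assoc]
      rw [Matrix.trace_mul_comm]
      simp only [Matrix.mul_assoc]
      conv_rhs => rw [hSS, Matrix.diagonal_transpose, ← hSS, Matrix.mul_assoc]
    rw [hF2, ip_neg_right, tA, tB] at hb
    rw [ip_sub_left, ip_smul_left]
    linarith
  have hG := ip_self_eq_zero (key _)
  exact sub_eq_zero.mp hG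
/-- At every stationary point `(W1, W2)` of the non-uniform ℓ2 regularized LAE loss,
the matrix `C = (I − W2W1)XXᵀ` is positive semidefinite. -/
theorem C_posSemidef_at_stationary (m k n : ℕ) (hk : 1 ≤ k) (hmk : k < m) (hn : 1 ≤ n)
    (X : Matrix (Fin m) (Fin n) ℝ) (lam : Fin k → ℝ)
    (hlam_pos : ∀ i, 0 < lam i) (hlam_mono : StrictMono lam)
    (W1 : Matrix (Fin k) (Fin m) ℝ) (W2 : Matrix (Fin m) (Fin k) ℝ)
    (hstat : fderiv ℝ (LAEloss m k n X lam) (W1, W2) = 0) :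
    ∀ v : Fin m → ℝ, 0 ≤ v ⬝ᵥ ((((1 : Matrix (Fin m) (Fin m) ℝ) - W2 * W1) * (X * Xᵀ)) *ᵥ v) := by
  intro v
  have hn0 : (n : ℝ) ≠ 0 := Nat.cast_ne_zero.mpr (by omega)
  have hnpos : (0 : ℝ) < (n : ℝ) := by positivity
  set A : Matrix (Fin m) (Fin m) ℝ := X * Xᵀ with hA
  set C : Matrix (Fin m) (Fin m) ℝ := (1 - W2 * W1) * A with hC
  set Dinv : Matrix (Fin k) (Fin k) ℝ := Matrix.diagonal (fun i => (lam i)⁻¹) with hDinv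
  set Q : Matrix (Fin m) (Fin m) ℝ := W1ᵀ * Dinv * W1 with hQ
  have heq2 := eq2_of_stat m k n X lam hlam_pos W1 W2 hstat
  have hEX : (X - W2 * W1 * X) * Xᵀ = C := by
    rw [hC, hA, Matrix.sub_mul, Matrix.sub_mul, Matrix.one_mul,
      Matrix.mul_assoc (W2 * W1) X Xᵀ]
  have hDD : Matrix.diagonal lam * Dinv = (1 : Matrix (Fin k) (Fin k) ℝ) := by
    rw [hDinv, Matrix.diagonal_mul_diagonal, ← Matrix.diagonal_one]
    exact congrArg _ (funext fun i => mul_inv_cancel₀ (hlam_pos i).ne')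
  have hW2 : (n : ℝ) • W2 = C * W1ᵀ * Dinv := by
    calc (n : ℝ) • W2 = (n : ℝ) • (W2 * (Matrix.diagonal lam * Dinv)) := by
          rw [hDD, Matrix.mul_one]
      _ = (n : ℝ) • ((W2 * Matrix.diagonal lam) * Dinv) := by rw [Matrix.mul_assoc]
      _ = (n : ℝ) • (((1 / (n:ℝ)) • ((X - W2 * W1 * X) * Xᵀ * W1ᵀ)) * Dinv) := by rw [heq2]
      _ = (n : ℝ) • ((1 / (n:ℝ)) • ((X - W2 * W1 * X) * Xᵀ * W1ᵀ * Dinv)) := by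
          rw [Matrix.smul_mul]
      _ = ((n : ℝ) * (1 / (n:ℝ))) • ((X - W2 * W1 * X) * Xᵀ * W1ᵀ * Dinv) := by rw [smul_smul]
      _ = (X - W2 * W1 * X) * Xᵀ * W1ᵀ * Dinv := by rw [mul_one_div_cancel hn0, one_smul]
      _ = C * W1ᵀ * Dinv := by rw [hEX]
  have hCQ : C * Q = (n : ℝ) • (W2 * W1) := by
    rw [hQ, ← Matrix.mul_assoc C (W1ᵀ * Dinv) W1, ← Matrix.mul_assoc C W1ᵀ Dinv, ← hW2,
      Matrix.smul_mul]
  have hCA : C = A - W2 * W1 * A := by rw [hC, Matrix.sub_mul, Matrix.one_mul]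
  set Mt : Matrix (Fin m) (Fin m) ℝ := (n : ℝ) • (1 : Matrix (Fin m) (Fin m) ℝ) + Q * A
    with hMt
  have hkey : C * Mt = (n : ℝ) • A := by
    rw [hMt, Matrix.mul_add, Matrix.mul_smul, Matrix.mul_one, ← Matrix.mul_assoc, hCQ,
      Matrix.smul_mul, hCA, smul_sub]
    abel
  have hAdot : ∀ y : Fin m → ℝ, y ⬝ᵥ (A *ᵥ y) = (Xᵀ *ᵥ y) ⬝ᵥ (Xᵀ *ᵥ y) := by
    intro y
    rw [hA, ← Matrix.mulVec_mulVec, Matrix.dotProduct_mulVec, ← Matrix.mulVec_transpose]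
  have hAnn : ∀ y : Fin m → ℝ, 0 ≤ y ⬝ᵥ (A *ᵥ y) := by
    intro y; rw [hAdot]
    exact Finset.sum_nonneg fun i _ => mul_self_nonneg _
  have hQvec : ∀ y : Fin m → ℝ, Q *ᵥ y = W1ᵀ *ᵥ (Dinv *ᵥ (W1 *ᵥ y)) := by
    intro y; rw [hQ, ← Matrix.mulVec_mulVec, ← Matrix.mulVec_mulVec]
  have hQnn : ∀ y : Fin m → ℝ, 0 ≤ y ⬝ᵥ (Q *ᵥ y) := by
    intro y
    rw [hQvec, Matrix.dotProduct_mulVec, ← Matrix.mulVec_transpose, Matrix.transpose_transpose]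
    refine Finset.sum_nonneg fun i _ => ?_
    rw [hDinv, Matrix.mulVec_diagonal]
    have : 0 ≤ (lam i)⁻¹ := (inv_nonneg).mpr (hlam_pos i).le
    calc (0:ℝ) ≤ (lam i)⁻¹ * ((W1 *ᵥ y) i * (W1 *ᵥ y) i) :=
          mul_nonneg this (mul_self_nonneg _)
      _ = (W1 *ᵥ y) i * ((lam i)⁻¹ * (W1 *ᵥ y) i) := by ring
  have hinj : Function.Injective (Matrix.mulVecLin Mt) := by
    rw [injective_iff_map_eq_zero]
    intro x hx
    rw [Matrix.mulVecLin_apply, hMt, Matrix.add_mulVec, Matrix.smul_mulVec,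
      Matrix.one_mulVec, ← Matrix.mulVec_mulVec] at hx
    have h0 : (A *ᵥ x) ⬝ᵥ ((n : ℝ) • x + Q *ᵥ (A *ᵥ x)) = 0 := by rw [hx]; simp
    rw [dotProduct_add, dotProduct_smul, smul_eq_mul, dotProduct_comm (A *ᵥ x) x] at h0
    have h1 : x ⬝ᵥ (A *ᵥ x) = 0 := by
      nlinarith [hAnn x, hQnn (A *ᵥ x), hnpos]
    have h2 : Xᵀ *ᵥ x = 0 := by
      rw [hAdot] at h1; exact dotProduct_self_eq_zero.mp h1
    have h3 : A *ᵥ x = 0 := by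
      rw [hA, ← Matrix.mulVec_mulVec, h2, Matrix.mulVec_zero]
    rw [h3, Matrix.mulVec_zero, add_zero] at hx
    have := smul_eq_zero.mp hx
    tauto
  obtain ⟨u, hu⟩ := LinearMap.injective_iff_surjective.mp hinj v
  rw [Matrix.mulVecLin_apply] at hu
  have hv : v = (n : ℝ) • u + Q *ᵥ (A *ᵥ u) := by
    rw [← hu, hMt, Matrix.add_mulVec, Matrix.smul_mulVec, Matrix.one_mulVec,
      ← Matrix.mulVec_mulVec]
  have hCv : C *ᵥ v = (n : ℝ) • (A *ᵥ u) := by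
    rw [← hu, Matrix.mulVec_mulVec, hkey, Matrix.smul_mulVec]
  calc (0:ℝ) ≤ (n:ℝ) * ((n:ℝ) * (u ⬝ᵥ (A *ᵥ u)) + (A *ᵥ u) ⬝ᵥ (Q *ᵥ (A *ᵥ u))) := by
        have := hAnn u; have := hQnn (A *ᵥ u); positivity
    _ = v ⬝ᵥ (C *ᵥ v) := by
        rw [hCv, dotProduct_smul, smul_eq_mul]
        congr 1
        rw [hv, add_dotProduct, smul_dotProduct, smul_eq_mul, dotProduct_comm (Q *ᵥ (A *ᵥ u))]
end

section
/- Let l ≤ k, let I = {i1 < ⋯ < il} ⊆ {1,…,k}, let O ∈ ℝ^{k×l} satisfy OᵀO = I_l, and set W2 = U_I · D_I · Oᵀ ∈ ℝ^{m×k}, where D_I = diag((1 − λ_{i1}/σ_{i1}²)^{1/2}, …, (1 − λ_{il}/σ_{il}²)^{1/2}) and U_I ∈ ℝ^{m×l} consists of the columns of U with indices i1,…,il. If the columns of W2 are pairwise orthogonal (wᵢᵀwⱼ = 0 for all i ≠ j), then each column of O contains exactly one nonzero entry, each row of O contains at most one nonzero entry, and every nonzero entry of O equals ±1. -/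
open Matrix BigOperators

/-- If `W2 = U_I · D_I · Oᵀ` (with `OᵀO = I_l`, `D_I = diag((1 − λ_i/σ_i²)^{1/2})_{i∈I}`,
`U_I` the columns of `U` indexed by `I = {i1 < ⋯ < il}`) has pairwise orthogonal columns,
then each column of `O` contains exactly one nonzero entry, each row of `O` contains at
most one nonzero entry, and every nonzero entry of `O` equals `±1`. -/
theorem orth_columns_implies_signed_perm (m k n : ℕ) (hk : 1 ≤ k) (hmk : k < m) (hn : 1 ≤ n)
    (X : Matrix (Fin m) (Fin n) ℝ) (lam : Fin k → ℝ)
    (hlam_pos : ∀ i, 0 < lam i) (hlam_mono : StrictMono lam)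
    (sig2 : Fin k → ℝ) (hs_anti : StrictAnti sig2) (hs_pos : ∀ i, 0 < sig2 i)
    (U : Matrix (Fin m) (Fin k) ℝ) (hUorth : Uᵀ * U = 1)
    (hUeig : ((1 / (n : ℝ)) • (X * Xᵀ)) * U = U * Matrix.diagonal sig2)
    (hrank : ((1 / (n : ℝ)) • (X * Xᵀ)).rank = k)
    (hlam_last : lam ⟨k - 1, by omega⟩ < sig2 ⟨k - 1, by omega⟩)
    (l : ℕ) (hl : l ≤ k) (ι : Fin l → Fin k) (hι : StrictMono ι)
    (O : Matrix (Fin k) (Fin l) ℝ) (hO : Oᵀ * O = 1)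
    (W2 : Matrix (Fin m) (Fin k) ℝ)
    (hW2 : W2 = (Matrix.of fun (i : Fin m) (j : Fin l) => U i (ι j))
        * Matrix.diagonal (fun j => Real.sqrt (1 - lam (ι j) / sig2 (ι j))) * Oᵀ)
    (horth : ∀ i j : Fin k, i ≠ j → ∑ a, W2 a i * W2 a j = 0) :
    (∀ j : Fin l, ∃! i : Fin k, O i j ≠ 0) ∧
    (∀ (i : Fin k) (j j' : Fin l), O i j ≠ 0 → O i j' ≠ 0 → j = j') ∧
    (∀ (i : Fin k) (j : Fin l), O i j = 0 ∨ O i j = 1 ∨ O i j = -1) := by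
  classical
  set d : Fin l → ℝ := fun a => 1 - lam (ι a) / sig2 (ι a) with hd
  set s : Fin l → ℝ := fun a => Real.sqrt (1 - lam (ι a) / sig2 (ι a)) with hs
  have hlt : ∀ i : Fin k, lam i < sig2 i := by
    intro i
    have hik : (i : ℕ) ≤ k - 1 := by omega
    have h1 : lam i ≤ lam ⟨k - 1, by omega⟩ := hlam_mono.monotone (by
      simpa [Fin.le_def] using hik)
    have h2 : sig2 ⟨k - 1, by omega⟩ ≤ sig2 i := hs_anti.antitone (by
      simpa [Fin.le_def] using hik)
    linarith
  have hd_pos : ∀ a, 0 < d a := by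
    intro a
    have : lam (ι a) / sig2 (ι a) < 1 := (div_lt_one (hs_pos _)).mpr (hlt _)
    simp only [hd]; linarith
  have hss : ∀ a, s a * s a = d a := by
    intro a
    exact Real.mul_self_sqrt (le_of_lt (hd_pos a))
  have hanti : StrictAnti d := by
    intro a b hab
    have h1 : lam (ι a) < lam (ι b) := hlam_mono (hι hab)
    have h2 : sig2 (ι b) < sig2 (ι a) := hs_anti (hι hab)
    have h3 : lam (ι a) / sig2 (ι a) < lam (ι b) / sig2 (ι b) := by
      apply div_lt_div₀ h1 h2.le (hlam_pos _).le (hs_pos _)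
    simp only [hd]; linarith
  have hUo : ∀ p q : Fin k, ∑ a, U a p * U a q = if p = q then 1 else 0 := by
    intro p q
    have := congrFun (congrFun hUorth p) q
    simpa [Matrix.mul_apply, Matrix.one_apply, Matrix.transpose_apply] using this
  have hOcol : ∀ a b : Fin l, ∑ i, O i a * O i b = if a = b then 1 else 0 := by
    intro a b
    have := congrFun (congrFun hO a) b
    simpa [Matrix.mul_apply, Matrix.one_apply, Matrix.transpose_apply] using this
  have hW2e : ∀ (a : Fin m) (i : Fin k), W2 a i = ∑ b, U a (ι b) * s b * O i b := by
    intro a i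
    rw [hW2]
    simp [Matrix.mul_apply, Matrix.diagonal_apply, Finset.sum_ite_eq, Finset.sum_ite_eq',
      mul_ite, ite_mul, mul_zero, zero_mul, hs]
  have hMeq : ∀ i j : Fin k, ∑ a, W2 a i * W2 a j = ∑ b, d b * (O i b * O j b) := by
    intro i j
    calc ∑ a, W2 a i * W2 a j
        = ∑ a, ∑ b, ∑ c, (U a (ι b) * s b * O i b) * (U a (ι c) * s c * O j c) := by
          apply Finset.sum_congr rfl; intro a _
          rw [hW2e, hW2e, Finset.sum_mul_sum]
      _ = ∑ b, ∑ c, ∑ a, (U a (ι b) * s b * O i b) * (U a (ι c) * s c * O j c) := by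
          rw [Finset.sum_comm]
          apply Finset.sum_congr rfl; intro b _
          rw [Finset.sum_comm]
      _ = ∑ b, ∑ c, (s b * O i b) * (s c * O j c) * ∑ a, U a (ι b) * U a (ι c) := by
          apply Finset.sum_congr rfl; intro b _
          apply Finset.sum_congr rfl; intro c _
          rw [Finset.mul_sum]
          apply Finset.sum_congr rfl; intro a _
          ring
      _ = ∑ b, d b * (O i b * O j b) := by
          apply Finset.sum_congr rfl; intro b _
          rw [Finset.sum_eq_single b]
          · rw [hUo, if_pos rfl, mul_one, ← hss b]; ring
          · intro c _ hcb
            rw [hUo, if_neg (fun h => hcb (hι.injective h).symm), mul_zero]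
          · intro h; exact absurd (Finset.mem_univ b) h
  have hM0 : ∀ i j : Fin k, i ≠ j → ∑ b, d b * (O i b * O j b) = 0 := by
    intro i j hij
    rw [← hMeq]; exact horth i j hij
  have heig : ∀ (i : Fin k) (a : Fin l),
      (∑ b, d b * (O i b * O i b)) * O i a = d a * O i a := by
    intro i a
    have key : ∑ j, (∑ b, d b * (O i b * O j b)) * O j a = d a * O i a := by
      have e1 : ∀ j : Fin k, (∑ b, d b * (O i b * O j b)) * O j a
          = ∑ b, d b * O i b * (O j b * O j a) := by
        intro j; rw [Finset.sum_mul]; apply Finset.sum_congr rfl; intro b _; ring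
      rw [Finset.sum_congr rfl fun j _ => e1 j, Finset.sum_comm]
      have e2 : ∀ b : Fin l, ∑ j, d b * O i b * (O j b * O j a)
          = d b * O i b * (if b = a then 1 else 0) := by
        intro b; rw [← Finset.mul_sum, hOcol b a]
      rw [Finset.sum_congr rfl fun b _ => e2 b]
      rw [Finset.sum_eq_single a]
      · simp
      · intro b _ hba; rw [if_neg hba, mul_zero]
      · intro h; exact absurd (Finset.mem_univ a) h
    rw [← key]
    rw [Finset.sum_eq_single i]
    · intro j _ hji; rw [hM0 i j (Ne.symm hji), zero_mul]
    · intro h; exact absurd (Finset.mem_univ i) h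
  have hmu : ∀ (i : Fin k) (a : Fin l), O i a ≠ 0 →
      (∑ b, d b * (O i b * O i b)) = d a := by
    intro i a h
    exact mul_right_cancel₀ h (heig i a)
  have rowUniq : ∀ (i : Fin k) (a b : Fin l), O i a ≠ 0 → O i b ≠ 0 → a = b := by
    intro i a b ha hb
    exact hanti.injective ((hmu i a ha).symm.trans (hmu i b hb))
  have colUniq : ∀ (i j : Fin k) (a : Fin l), i ≠ j → O i a ≠ 0 → O j a = 0 := by
    intro i j a hij ha
    by_contra hja
    have h0 := hM0 i j hij
    rw [Finset.sum_eq_single a] at h0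
    · exact (mul_ne_zero (ne_of_gt (hd_pos a)) (mul_ne_zero ha hja)) h0
    · intro b _ hba
      have : O i b = 0 := by
        by_contra hib
        exact hba (rowUniq i b a hib ha)
      rw [this]; ring
    · intro h; exact absurd (Finset.mem_univ a) h
  refine ⟨?_, ?_, ?_⟩
  · intro a
    have : ∃ i, O i a ≠ 0 := by
      by_contra h
      push_neg at h
      have := hOcol a a
      simp [h] at this
    obtain ⟨i, hi⟩ := this
    refine ⟨i, hi, ?_⟩
    intro y hy
    by_contra hne
    exact hy (colUniq i y a (fun h => hne h.symm) hi)
  · intro i a b ha hb; exact rowUniq i a b ha hb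
  · intro i a
    by_cases h : O i a = 0
    · exact Or.inl h
    · right
      have h1 : ∑ j, O j a * O j a = 1 := by rw [hOcol a a, if_pos rfl]
      rw [Finset.sum_eq_single i] at h1
      · exact mul_self_eq_one_iff.mp h1
      · intro j _ hji
        rw [colUniq i j a (Ne.symm hji) h]; ring
      · intro hh; exact absurd (Finset.mem_univ i) hh
end

section
/- Condition-number lower bound for deterministic nested dropout: let k ≥ 2, let σ1 > σ2 > ⋯ > σk > 0, and let 1 ≥ p1 > p2 > ⋯ > pk > 0. Then max over i ∈ {1,…,k−1} of 8 p1 σ1² / ((σi² − σ_{i+1}²)(p_i − p_{i+1})) is strictly greater than 8 σ1² (k−1)² / (σ1² − σk²). -/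
open BigOperators

/-- Condition-number lower bound for deterministic nested dropout:
the maximum over `i ∈ {1,…,k−1}` of `8 p1 σ1² / ((σi² − σ_{i+1}²)(p_i − p_{i+1}))`
is strictly greater than `8 σ1² (k−1)² / (σ1² − σk²)`. -/
theorem nested_dropout_condition_number_bound (k : ℕ) (hk : 2 ≤ k)
    (sigma p : Fin k → ℝ)
    (hs_anti : StrictAnti sigma) (hs_pos : ∀ i, 0 < sigma i)
    (hp_anti : StrictAnti p) (hp_pos : ∀ i, 0 < p i)
    (hp_le_one : p ⟨0, by omega⟩ ≤ 1) :
    sSup {x : ℝ | ∃ i : Fin k, ∃ h : (i : ℕ) + 1 < k,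
        x = 8 * p ⟨0, by omega⟩ * (sigma ⟨0, by omega⟩) ^ 2
          / (((sigma i) ^ 2 - (sigma ⟨(i : ℕ) + 1, h⟩) ^ 2)
              * (p i - p ⟨(i : ℕ) + 1, h⟩))}
      > 8 * (sigma ⟨0, by omega⟩) ^ 2 * ((k : ℝ) - 1) ^ 2
        / ((sigma ⟨0, by omega⟩) ^ 2 - (sigma ⟨k - 1, by omega⟩) ^ 2) := by
  set S := {x : ℝ | ∃ i : Fin k, ∃ h : (i : ℕ) + 1 < k,
        x = 8 * p ⟨0, by omega⟩ * (sigma ⟨0, by omega⟩) ^ 2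
          / (((sigma i) ^ 2 - (sigma ⟨(i : ℕ) + 1, h⟩) ^ 2)
              * (p i - p ⟨(i : ℕ) + 1, h⟩))} with hS
  set n := k - 1 with hn
  have hn1 : 1 ≤ n := by omega
  have hkn : k = n + 1 := by omega
  have hnk : n < k := by omega
  have h0k : 0 < k := by omega
  set F : ℕ → ℝ := fun j => if h : j < k then sigma ⟨j, h⟩ ^ 2 else 0 with hF
  set G : ℕ → ℝ := fun j => if h : j < k then p ⟨j, h⟩ else 0 with hG
  have hFv : ∀ (j : ℕ) (h : j < k), F j = sigma ⟨j, h⟩ ^ 2 := fun j h => dif_pos h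
  have hGv : ∀ (j : ℕ) (h : j < k), G j = p ⟨j, h⟩ := fun j h => dif_pos h
  have ha : ∀ j < n, 0 < F j - F (j + 1) := by
    intro j hj
    have h1 : j < k := by omega
    have h2 : j + 1 < k := by omega
    rw [hFv j h1, hFv (j+1) h2]
    have hlt : sigma ⟨j+1, h2⟩ < sigma ⟨j, h1⟩ := hs_anti (by simp [Fin.lt_def])
    have := (hs_pos ⟨j+1, h2⟩)
    nlinarith
  have hb : ∀ j < n, 0 < G j - G (j + 1) := by
    intro j hj
    have h1 : j < k := by omega
    have h2 : j + 1 < k := by omega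
    rw [hGv j h1, hGv (j+1) h2]
    have hlt : p ⟨j+1, h2⟩ < p ⟨j, h1⟩ := hp_anti (by simp [Fin.lt_def])
    linarith
  have hSa : ∑ j ∈ Finset.range n, (F j - F (j + 1)) = F 0 - F n :=
    Finset.sum_range_sub' F n
  have hSb : ∑ j ∈ Finset.range n, (G j - G (j + 1)) = G 0 - G n :=
    Finset.sum_range_sub' G n
  have hSapos : 0 < F 0 - F n := by
    rw [hFv 0 h0k, hFv n hnk]
    have hlt : sigma ⟨n, hnk⟩ < sigma ⟨0, h0k⟩ := hs_anti (by simp [Fin.lt_def]; omega)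
    have := hs_pos ⟨n, hnk⟩
    nlinarith
  have hSbp0 : G 0 - G n < p ⟨0, h0k⟩ := by
    rw [hGv 0 h0k, hGv n hnk]
    have := hp_pos ⟨n, hnk⟩
    linarith
  -- Cauchy-Schwarz
  set c : ℕ → ℝ := fun j => Real.sqrt (F j - F (j + 1)) * Real.sqrt (G j - G (j + 1)) with hc
  have hcs : (∑ j ∈ Finset.range n, c j) ^ 2 ≤ (F 0 - F n) * (G 0 - G n) := by
    rw [← hSa, ← hSb]
    calc (∑ j ∈ Finset.range n, c j) ^ 2
        ≤ (∑ j ∈ Finset.range n, Real.sqrt (F j - F (j + 1)) ^ 2) *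
          ∑ j ∈ Finset.range n, Real.sqrt (G j - G (j + 1)) ^ 2 :=
          Finset.sum_mul_sq_le_sq_mul_sq _ _ _
      _ = _ := by
          congr 1 <;> apply Finset.sum_congr rfl <;> intro j hj <;>
            rw [Real.sq_sqrt]
          · exact (ha j (Finset.mem_range.mp hj)).le
          · exact (hb j (Finset.mem_range.mp hj)).le
  -- pick minimal c
  obtain ⟨j, hjmem, hjmin⟩ := Finset.exists_min_image (Finset.range n) c
    ⟨0, Finset.mem_range.mpr hn1⟩
  have hjn : j < n := Finset.mem_range.mp hjmem
  have hcj_nonneg : 0 ≤ c j := mul_nonneg (Real.sqrt_nonneg _) (Real.sqrt_nonneg _)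
  have hmin : (n : ℝ) * c j ≤ ∑ j ∈ Finset.range n, c j := by
    have := Finset.card_nsmul_le_sum (Finset.range n) c (c j) (fun i hi => hjmin i hi)
    simpa [nsmul_eq_mul] using this
  have hcjsq : c j ^ 2 = (F j - F (j + 1)) * (G j - G (j + 1)) := by
    rw [hc]
    rw [mul_pow, Real.sq_sqrt (ha j hjn).le, Real.sq_sqrt (hb j hjn).le]
  have key : (n : ℝ) ^ 2 * ((F j - F (j + 1)) * (G j - G (j + 1))) < (F 0 - F n) * p ⟨0, h0k⟩ := by
    have h1 : ((n : ℝ) * c j) ^ 2 ≤ (∑ j ∈ Finset.range n, c j) ^ 2 := by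
      have hnn : (0:ℝ) ≤ (n : ℝ) * c j := mul_nonneg (by positivity) hcj_nonneg
      exact pow_le_pow_left₀ hnn hmin 2
    have h2 : (F 0 - F n) * (G 0 - G n) < (F 0 - F n) * p ⟨0, h0k⟩ :=
      (mul_lt_mul_iff_right₀ hSapos).mpr hSbp0
    calc (n : ℝ) ^ 2 * ((F j - F (j + 1)) * (G j - G (j + 1)))
        = ((n : ℝ) * c j) ^ 2 := by rw [mul_pow, hcjsq]
      _ ≤ (∑ j ∈ Finset.range n, c j) ^ 2 := h1
      _ ≤ (F 0 - F n) * (G 0 - G n) := hcs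
      _ < _ := h2
  -- the candidate element
  have hjk : j < k := by omega
  have hj1k : j + 1 < k := by omega
  set x := 8 * p ⟨0, h0k⟩ * (sigma ⟨0, h0k⟩) ^ 2
      / ((F j - F (j + 1)) * (G j - G (j + 1))) with hx
  have hxmem : x ∈ S := by
    refine ⟨⟨j, hjk⟩, hj1k, ?_⟩
    rw [hx, hFv j hjk, hFv (j+1) hj1k, hGv j hjk, hGv (j+1) hj1k]
  have hbdd : BddAbove S := by
    apply Set.Finite.bddAbove
    apply Set.Finite.subset (Set.finite_range (fun i : Fin k =>
      if h : (i : ℕ) + 1 < k then 8 * p ⟨0, h0k⟩ * (sigma ⟨0, h0k⟩) ^ 2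
          / (((sigma i) ^ 2 - (sigma ⟨(i : ℕ) + 1, h⟩) ^ 2)
              * (p i - p ⟨(i : ℕ) + 1, h⟩)) else 0))
    rintro y ⟨i, h, rfl⟩
    exact ⟨i, by simp [h]⟩
  have habpos : 0 < (F j - F (j + 1)) * (G j - G (j + 1)) :=
    mul_pos (ha j hjn) (hb j hjn)
  have hp0 := hp_pos ⟨0, h0k⟩
  have hs0 := hs_pos ⟨0, h0k⟩
  have hkcast : ((k : ℝ) - 1) = (n : ℝ) := by
    rw [hkn]; push_cast; ring
  have hRHS : 8 * (sigma ⟨0, h0k⟩) ^ 2 * ((k : ℝ) - 1) ^ 2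
        / ((sigma ⟨0, h0k⟩) ^ 2 - (sigma ⟨k - 1, by omega⟩) ^ 2) < x := by
    have hden : (sigma ⟨0, h0k⟩) ^ 2 - (sigma ⟨k - 1, by omega⟩) ^ 2 = F 0 - F n := by
      rw [hFv 0 h0k, hFv n hnk]
    rw [hden, hkcast, hx, div_lt_div_iff₀ hSapos habpos]
    nlinarith [key, sq_nonneg (sigma ⟨0, h0k⟩)]
  exact lt_of_lt_of_le hRHS (le_csSup hbdd hxmem)
end

section
/- Lyapunov decrease along the rotation flow: let X ∈ ℝ^{m×n}, Σ = (1/n)XXᵀ, let d1 > d2 > ⋯ > dk > 0, D = diag(d1,…,dk), let σ1² ≥ ⋯ ≥ σk² be the k largest eigenvalues of Σ and S² = diag(σ1²,…,σk²), and define V(W) = Tr((S² − WΣWᵀ)D) for W ∈ ℝ^{k×m}. Suppose W : ℝ → ℝ^{k×m} is differentiable and satisfies W'(t) = A(W(t)) · W(t) for all t, where A(W) = (1/(2n)) (ut(W XXᵀ Wᵀ) − lt(W XXᵀ Wᵀ)), with ut(M) (resp. lt(M)) the matrix obtained from M by setting to zero all entries strictly below (resp. strictly above) the diagonal. Then for all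 t, writing wᵢ(t)ᵀ for the i-th row of W(t), d/dt V(W(t)) = Σ_{i=2}^{k} Σ_{j=1}^{i−1} (d_i − d_j) (w_i(t)ᵀ Σ w_j(t))², and in particular d/dt V(W(t)) ≤ 0. -/
open Matrix BigOperators

attribute [local instance] Matrix.frobeniusNormedAddCommGroup Matrix.frobeniusNormedSpace

theorem entry_deriv_aux {k m : ℕ} {W : ℝ → Matrix (Fin k) (Fin m) ℝ}
    {W' : Matrix (Fin k) (Fin m) ℝ}
    {t : ℝ} (h : HasDerivAt W W' t) (i : Fin k) (a : Fin m) :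
    HasDerivAt (fun s => W s i a) (W' i a) t :=
  (LinearMap.toContinuousLinearMap
    ({ toFun := fun M => M i a, map_add' := fun _ _ => rfl,
       map_smul' := fun _ _ => rfl } : Matrix (Fin k) (Fin m) ℝ →ₗ[ℝ] ℝ)).hasFDerivAt.comp_hasDerivAt t h

/-- Lyapunov decrease along the rotation flow: with `Σ = (1/n)XXᵀ`,
`V(W) = Tr((S² − WΣWᵀ)D)` (`D = diag(d1,…,dk)`, `d1 > ⋯ > dk > 0`, `S² = diag(σ1²,…,σk²)`
the `k` largest eigenvalues of `Σ`), and `W` solving `W' = A(W)W` where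
`A(W) = (1/(2n))(ut(WXXᵀWᵀ) − lt(WXXᵀWᵀ))`, one has
`d/dt V(W(t)) = Σ_{i=2}^{k} Σ_{j<i} (d_i − d_j)(w_iᵀΣw_j)² ≤ 0`. -/
theorem lyapunov_decrease_rotation_flow (m k n : ℕ) (hk : 1 ≤ k) (hmk : k < m) (hn : 1 ≤ n)
    (X : Matrix (Fin m) (Fin n) ℝ)
    (d : Fin k → ℝ) (hd_anti : StrictAnti d) (hd_pos : ∀ i, 0 < d i)
    (sig2 : Fin k → ℝ) (hs_anti : Antitone sig2)
    (hs_eig : ∀ i, ∃ v : Fin m → ℝ, v ≠ 0 ∧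
        ((1 / (n : ℝ)) • (X * Xᵀ)) *ᵥ v = sig2 i • v)
    (W : ℝ → Matrix (Fin k) (Fin m) ℝ)
    (hW : ∀ t, HasDerivAt W
      (((1 / (2 * (n : ℝ))) • ((Matrix.of fun i j : Fin k =>
            if j < i then 0 else (W t * (X * Xᵀ) * (W t)ᵀ) i j)
        - (Matrix.of fun i j : Fin k =>
            if i < j then 0 else (W t * (X * Xᵀ) * (W t)ᵀ) i j))) * W t) t) :
    ∀ t : ℝ,
      HasDerivAt (fun s => Matrix.trace
          ((Matrix.diagonal sig2 - W s * ((1 / (n : ℝ)) • (X * Xᵀ)) * (W s)ᵀ)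
            * Matrix.diagonal d))
        (∑ i : Fin k, ∑ j : Fin k, if j < i then
            (d i - d j) * ((W t * ((1 / (n : ℝ)) • (X * Xᵀ)) * (W t)ᵀ) i j) ^ 2 else 0) t ∧
      (∑ i : Fin k, ∑ j : Fin k, if j < i then
          (d i - d j) * ((W t * ((1 / (n : ℝ)) • (X * Xᵀ)) * (W t)ᵀ) i j) ^ 2 else 0) ≤ 0 := by
  intro t
  have hn0 : (n : ℝ) ≠ 0 := Nat.cast_ne_zero.2 (by omega)
  set Cm : Matrix (Fin m) (Fin m) ℝ := (1 / (n : ℝ)) • (X * Xᵀ) with hCm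
  set G : Matrix (Fin k) (Fin k) ℝ := W t * Cm * (W t)ᵀ with hGdef
  set A : Matrix (Fin k) (Fin k) ℝ := (1 / (2 * (n : ℝ))) • ((Matrix.of fun i j : Fin k =>
            if j < i then 0 else (W t * (X * Xᵀ) * (W t)ᵀ) i j)
        - (Matrix.of fun i j : Fin k =>
            if i < j then 0 else (W t * (X * Xᵀ) * (W t)ᵀ) i j)) with hAdef
  set W' : Matrix (Fin k) (Fin m) ℝ := A * W t with hW'def
  have hWt : HasDerivAt W W' t := hW t
  have hentry : ∀ (i : Fin k) (a : Fin m), HasDerivAt (fun s => W s i a) (W' i a) t :=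
    fun i a => entry_deriv_aux hWt i a
  -- symmetry of G
  have hGT : Gᵀ = G := by
    rw [hGdef, transpose_mul, transpose_mul, transpose_transpose, hCm, transpose_smul,
      transpose_mul, transpose_transpose, Matrix.mul_assoc]
  have hG : ∀ i j, G j i = G i j := fun i j => by
    conv_lhs => rw [← hGT]
    rfl
  -- entrywise formulas
  have hGe : ∀ p i : Fin k, G p i = ∑ a, (∑ b, W t p b * Cm b a) * W t i a := by
    intro p i
    rw [hGdef]
    simp [Matrix.mul_apply, Matrix.transpose_apply]
  have hGM : ∀ i p : Fin k, (W t * (X * Xᵀ) * (W t)ᵀ) i p = (n : ℝ) * G i p := by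
    intro i p
    have h : G = (1 / (n : ℝ)) • (W t * (X * Xᵀ) * (W t)ᵀ) := by
      rw [hGdef, hCm, Matrix.mul_smul, Matrix.smul_mul]
    rw [h, Matrix.smul_apply, smul_eq_mul]
    field_simp
  have hAe : ∀ i p : Fin k, A i p = (1 / (2 * (n : ℝ))) *
      ((if p < i then 0 else (n : ℝ) * G i p) - (if i < p then 0 else (n : ℝ) * G i p)) := by
    intro i p
    rw [hAdef, Matrix.smul_apply, Matrix.sub_apply, Matrix.of_apply, Matrix.of_apply,
      smul_eq_mul, hGM i p]
  have hw' : ∀ (i : Fin k) (b : Fin m), W' i b = ∑ p, A i p * W t p b := by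
    intro i b
    rw [hW'def, Matrix.mul_apply]
  -- the function in entrywise form
  have hfun : (fun s => Matrix.trace
          ((Matrix.diagonal sig2 - W s * Cm * (W s)ᵀ) * Matrix.diagonal d))
      = fun s => ∑ i, (sig2 i - ∑ a, (∑ b, W s i b * Cm b a) * W s i a) * d i := by
    funext s
    simp only [Matrix.trace, Matrix.diag, Matrix.mul_diagonal]
    simp [Matrix.sub_apply, Matrix.diagonal_apply_eq, Matrix.mul_apply, Matrix.transpose_apply]
  have hder : HasDerivAt
      (fun s => ∑ i, (sig2 i - ∑ a, (∑ b, W s i b * Cm b a) * W s i a) * d i)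
      (∑ i, ((0 - ∑ a, ((∑ b, W' i b * Cm b a) * W t i a
          + (∑ b, W t i b * Cm b a) * W' i a)) * d i)) t := by
    refine HasDerivAt.fun_sum fun i _ => ?_
    refine HasDerivAt.mul_const ?_ (d i)
    refine (hasDerivAt_const t (sig2 i)).sub ?_
    refine HasDerivAt.fun_sum fun a _ => ?_
    exact (HasDerivAt.fun_sum fun b _ => (hentry i b).mul_const (Cm b a)).mul (hentry i a)
  -- the key algebraic identity
  have h1 : ∀ i : Fin k, (∑ a, ((∑ b, W' i b * Cm b a) * W t i a
      + (∑ b, W t i b * Cm b a) * W' i a)) = ∑ p, 2 * (A i p * G i p) := by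
    intro i
    rw [Finset.sum_add_distrib]
    have e1 : (∑ a, (∑ b, W' i b * Cm b a) * W t i a) = ∑ p, A i p * G p i := by
      calc ∑ a, (∑ b, W' i b * Cm b a) * W t i a
          = ∑ a, ∑ b, ∑ p, A i p * (W t p b * Cm b a * W t i a) := by
            refine Finset.sum_congr rfl fun a _ => ?_
            rw [Finset.sum_mul]
            refine Finset.sum_congr rfl fun b _ => ?_
            rw [hw' i b, Finset.sum_mul, Finset.sum_mul]
            exact Finset.sum_congr rfl fun p _ => by ring
        _ = ∑ p, ∑ a, ∑ b, A i p * (W t p b * Cm b a * W t i a) := by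
            rw [show (∑ a : Fin m, ∑ b : Fin m, ∑ p : Fin k, A i p * (W t p b * Cm b a * W t i a))
                = ∑ a : Fin m, ∑ p : Fin k, ∑ b : Fin m, A i p * (W t p b * Cm b a * W t i a)
              from Finset.sum_congr rfl fun a _ => Finset.sum_comm]
            exact Finset.sum_comm
        _ = ∑ p, A i p * G p i := by
            refine Finset.sum_congr rfl fun p _ => ?_
            rw [hGe p i, Finset.mul_sum]
            refine Finset.sum_congr rfl fun a _ => ?_
            rw [Finset.sum_mul, Finset.mul_sum]
    have e2 : (∑ a, (∑ b, W t i b * Cm b a) * W' i a) = ∑ p, A i p * G i p := by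
      calc ∑ a, (∑ b, W t i b * Cm b a) * W' i a
          = ∑ a, ∑ p, A i p * ((∑ b, W t i b * Cm b a) * W t p a) := by
            refine Finset.sum_congr rfl fun a _ => ?_
            rw [hw' i a, Finset.mul_sum]
            exact Finset.sum_congr rfl fun p _ => by ring
        _ = ∑ p, ∑ a, A i p * ((∑ b, W t i b * Cm b a) * W t p a) := Finset.sum_comm
        _ = ∑ p, A i p * G i p := by
            refine Finset.sum_congr rfl fun p _ => ?_
            rw [hGe i p, Finset.mul_sum]
    rw [e1, e2, ← Finset.sum_add_distrib]
    refine Finset.sum_congr rfl fun p _ => ?_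
    rw [hG i p]
    ring
  have h2 : ∀ i p : Fin k, -(2 * (A i p * G i p) * d i)
      = (if p < i then d i * G i p ^ 2 else 0) - (if i < p then d i * G i p ^ 2 else 0) := by
    intro i p
    rw [hAe i p]
    rcases lt_trichotomy p i with h | h | h
    · rw [if_pos h, if_neg (asymm h), if_pos h, if_neg (asymm h)]
      field_simp
      ring
    · subst h
      simp
    · rw [if_neg (asymm h), if_pos h, if_neg (asymm h), if_pos h]
      field_simp
      ring
  have hEq : (∑ i, ((0 - ∑ a, ((∑ b, W' i b * Cm b a) * W t i a
          + (∑ b, W t i b * Cm b a) * W' i a)) * d i))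
      = ∑ i : Fin k, ∑ j : Fin k, if j < i then (d i - d j) * (G i j) ^ 2 else 0 := by
    have step1 : (∑ i, ((0 - ∑ a, ((∑ b, W' i b * Cm b a) * W t i a
          + (∑ b, W t i b * Cm b a) * W' i a)) * d i))
        = ∑ i, ∑ p, ((if p < i then d i * G i p ^ 2 else 0)
            - (if i < p then d i * G i p ^ 2 else 0)) := by
      refine Finset.sum_congr rfl fun i _ => ?_
      rw [h1 i, zero_sub, neg_mul, Finset.sum_mul, ← Finset.sum_neg_distrib]
      exact Finset.sum_congr rfl fun p _ => h2 i p
    rw [step1]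
    have step2 : (∑ i : Fin k, ∑ p : Fin k, (if i < p then d i * G i p ^ 2 else 0))
        = ∑ i : Fin k, ∑ p : Fin k, (if p < i then d p * G i p ^ 2 else 0) := by
      rw [Finset.sum_comm]
      refine Finset.sum_congr rfl fun i _ => Finset.sum_congr rfl fun p _ => ?_
      split_ifs with h
      · rw [hG i p]
      · rfl
    calc ∑ i, ∑ p, ((if p < i then d i * G i p ^ 2 else 0)
            - (if i < p then d i * G i p ^ 2 else 0))
        = (∑ i : Fin k, ∑ p : Fin k, (if p < i then d i * G i p ^ 2 else 0))
          - ∑ i : Fin k, ∑ p : Fin k, (if i < p then d i * G i p ^ 2 else 0) := by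
          rw [← Finset.sum_sub_distrib]
          exact Finset.sum_congr rfl fun i _ => by rw [Finset.sum_sub_distrib]
      _ = (∑ i : Fin k, ∑ p : Fin k, (if p < i then d i * G i p ^ 2 else 0))
          - ∑ i : Fin k, ∑ p : Fin k, (if p < i then d p * G i p ^ 2 else 0) := by rw [step2]
      _ = ∑ i : Fin k, ∑ j : Fin k, if j < i then (d i - d j) * (G i j) ^ 2 else 0 := by
          rw [← Finset.sum_sub_distrib]
          refine Finset.sum_congr rfl fun i _ => ?_
          rw [← Finset.sum_sub_distrib]
          refine Finset.sum_congr rfl fun p _ => ?_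
          split_ifs with h
          · ring
          · ring
  have hle : (∑ i : Fin k, ∑ j : Fin k, if j < i then (d i - d j) * (G i j) ^ 2 else 0) ≤ 0 := by
    refine Finset.sum_nonpos fun i _ => Finset.sum_nonpos fun j _ => ?_
    split_ifs with hji
    · exact mul_nonpos_of_nonpos_of_nonneg (sub_nonpos.2 (hd_anti hji).le) (sq_nonneg _)
    · exact le_refl 0
  exact ⟨hfun ▸ hEq ▸ hder, hle⟩
end
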